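/- The map S defined on words by S(z_{i₁}⋯z_{i_r}) = (−1)^r z_{i_r}⋯z_{i₁} is an antipode for the bialgebra (ℚ⟨Z⟩, ⋆, Δ_decon): for every nonempty word w = z_{i₁}⋯z_{i_r}, ∑_{k=0}^{r} S(z_{i₁}⋯z_{i_k}) ⋆ z_{i_{k+1}}⋯z_{i_r} = 0. -/

import Mathlib

/-- Noncommutative polynomials ℚ⟨Z⟩, as finitely supported functions on words. -/
abbrev QW (Z : Type*) := List Z →₀ ℚ

/-- Prepend a letter to every word of a polynomial: `a·p`. -/
noncomputable def pre {Z : Type*} (a : Z) (p : QW Z) : QW Z :=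
  Finsupp.mapDomain (a :: ·) p

/-- `Lw D c w` is `L_c(w)`: for `w = x t`, it is `(c ◊ x) t`, and `L_c(1) = 0`. -/
noncomputable def Lw {Z : Type*} (D : (Z →₀ ℚ) →ₗ[ℚ] (Z →₀ ℚ) →ₗ[ℚ] (Z →₀ ℚ))
    (c : Z →₀ ℚ) : List Z → QW Z
  | [] => 0
  | x :: t => (D c (Finsupp.single x 1)).sum fun b r => Finsupp.single (b :: t) r

/-- Linear extension of `L_c` to ℚ⟨Z⟩. -/
noncomputable def Lmap {Z : Type*} (D : (Z →₀ ℚ) →ₗ[ℚ] (Z →₀ ℚ) →ₗ[ℚ] (Z →₀ ℚ))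
    (c : Z →₀ ℚ) (p : QW Z) : QW Z :=
  p.sum fun w r => r • Lw D c w

/-- The generalised quasi-shuffle product of two words:
`(au) ⋆ (bv) = a(u ⋆ bv) + b(au ⋆ v) − L_{a◊b}(u ⋆ v)`. -/
noncomputable def star {Z : Type*} (D : (Z →₀ ℚ) →ₗ[ℚ] (Z →₀ ℚ) →ₗ[ℚ] (Z →₀ ℚ)) :
    List Z → List Z → QW Z
  | [], v => Finsupp.single v 1
  | u, [] => Finsupp.single u 1
  | a :: u, b :: v =>
      pre a (star D u (b :: v)) + pre b (star D (a :: u) v)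
        - Lmap D (D (Finsupp.single a 1) (Finsupp.single b 1)) (star D u v)
  termination_by u v => u.length + v.length

/- STATEMENT 9: the map S(z_{i₁}⋯z_{i_r}) = (−1)^r z_{i_r}⋯z_{i₁} is an antipode for
the bialgebra (ℚ⟨Z⟩, ⋆, Δ_decon): for every nonempty word w = z_{i₁}⋯z_{i_r},
∑_{k=0}^{r} S(z_{i₁}⋯z_{i_k}) ⋆ z_{i_{k+1}}⋯z_{i_r} = 0. -/


section Aux
variable {Z : Type*} (D : (Z →₀ ℚ) →ₗ[ℚ] (Z →₀ ℚ) →ₗ[ℚ] (Z →₀ ℚ))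

/-- `pre` as a linear map. -/
noncomputable def preL (a : Z) : QW Z →ₗ[ℚ] QW Z := Finsupp.lmapDomain ℚ ℚ (a :: ·)

/-- prepend a linear combination of letters. -/
noncomputable def pc (m : Z →₀ ℚ) : QW Z →ₗ[ℚ] QW Z :=
  Finsupp.linearCombination ℚ (preL (Z := Z)) m

/-- `Lmap` as a linear map. -/
noncomputable def LM (c : Z →₀ ℚ) : QW Z →ₗ[ℚ] QW Z :=
  Finsupp.linearCombination ℚ (Lw D c)

lemma pre_eq (a : Z) (p : QW Z) : pre a p = preL a p := rfl

lemma Lmap_eq (c : Z →₀ ℚ) (p : QW Z) : Lmap D c p = LM D c p := rfl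

lemma preL_single (a : Z) (t : List Z) (r : ℚ) :
    preL a (Finsupp.single t r) = Finsupp.single (a :: t) r := by
  simp [preL, Finsupp.mapDomain_single]

lemma LM_single (c : Z →₀ ℚ) (t : List Z) (r : ℚ) :
    LM D c (Finsupp.single t r) = r • Lw D c t := by
  simp [LM]

lemma pc_single (m : Z →₀ ℚ) (t : List Z) (r : ℚ) :
    pc m (Finsupp.single t r) = m.sum fun b s => Finsupp.single (b :: t) (s * r) := by
  classical
  rw [pc, Finsupp.linearCombination_apply, LinearMap.finsupp_sum_apply]
  refine Finsupp.sum_congr fun b _ => ?_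
  rw [LinearMap.smul_apply, preL_single, Finsupp.smul_single, smul_eq_mul]

lemma Lw_cons (c : Z →₀ ℚ) (x : Z) (t : List Z) :
    Lw D c (x :: t) = pc (D c (Finsupp.single x 1)) (Finsupp.single t 1) := by
  rw [pc_single]
  refine Finsupp.sum_congr fun b _ => by rw [mul_one]

end Aux

section Aux2
variable {Z : Type*} (D : (Z →₀ ℚ) →ₗ[ℚ] (Z →₀ ℚ) →ₗ[ℚ] (Z →₀ ℚ))

lemma pc_eta (a : Z) : pc (Finsupp.single a (1:ℚ)) = preL a := by
  simp [pc]

lemma pc_zero : pc (0 : Z →₀ ℚ) = 0 := map_zero _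

lemma pc_add (f g : Z →₀ ℚ) : pc (f + g) = pc f + pc g :=
  map_add (Finsupp.linearCombination ℚ (preL (Z := Z))) f g

lemma pc_smul (s : ℚ) (f : Z →₀ ℚ) : pc (s • f) = s • pc f :=
  map_smul (Finsupp.linearCombination ℚ (preL (Z := Z))) s f

lemma LM_preL (c : Z →₀ ℚ) (a : Z) (p : QW Z) :
    LM D c (preL a p) = pc (D c (Finsupp.single a 1)) p := by
  induction p using Finsupp.induction_linear with
  | zero => simp
  | add f g hf hg => rw [map_add, map_add, hf, hg, map_add]
  | single w r =>
      rw [preL_single, LM_single, Lw_cons,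
        show (Finsupp.single w r : QW Z) = r • Finsupp.single w 1 by simp,
        map_smul]

lemma LM_pc (c m : Z →₀ ℚ) (p : QW Z) :
    LM D c (pc m p) = pc (D c m) p := by
  induction m using Finsupp.induction_linear with
  | zero => simp [pc_zero]
  | add f g hf hg =>
      rw [pc_add, LinearMap.add_apply, map_add, hf, hg, map_add, pc_add,
        LinearMap.add_apply]
  | single b s =>
      rw [show (Finsupp.single b s : Z →₀ ℚ) = s • Finsupp.single b 1 by simp,
        pc_smul, LinearMap.smul_apply, map_smul, map_smul, pc_smul,
        LinearMap.smul_apply, pc_eta, LM_preL]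

lemma LM_LM (hassoc : ∀ x y z, D (D x y) z = D x (D y z))
    (c e : Z →₀ ℚ) (p : QW Z) :
    LM D c (LM D e p) = LM D (D c e) p := by
  induction p using Finsupp.induction_linear with
  | zero => simp
  | add f g hf hg => rw [map_add, map_add, hf, hg, map_add]
  | single w r =>
      rw [LM_single, LM_single, map_smul]
      cases w with
      | nil => simp [Lw]
      | cons x t => rw [Lw_cons, Lw_cons, LM_pc, ← hassoc]

lemma star_nil_left (v : List Z) : star D [] v = Finsupp.single v 1 := by
  cases v <;> rw [_root_.star]

lemma star_nil_right (u : List Z) : star D u [] = Finsupp.single u 1 := by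
  cases u <;> rw [_root_.star] <;> simp

lemma star_cons_cons (a b : Z) (u v : List Z) :
    star D (a :: u) (b :: v) =
      preL a (star D u (b :: v)) + preL b (star D (a :: u) v)
        - LM D (D (Finsupp.single a 1) (Finsupp.single b 1)) (star D u v) := by
  rw [_root_.star]; rfl

end Aux2

section Aux3
variable {Z : Type*} (D : (Z →₀ ℚ) →ₗ[ℚ] (Z →₀ ℚ) →ₗ[ℚ] (Z →₀ ℚ))

lemma SE_nil_nil (c : Z →₀ ℚ) : LM D c (star D [] []) = 0 := by
  rw [star_nil_left, LM_single]
  simp [Lw]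

lemma SE_nil_left (c : Z →₀ ℚ) (b : Z) (v : List Z) :
    LM D c (star D [] (b :: v)) =
      pc (D c (Finsupp.single b 1)) (star D [] v) := by
  rw [star_nil_left, LM_single, one_smul, Lw_cons, star_nil_left]

lemma SE_nil_right (c : Z →₀ ℚ) (a : Z) (u : List Z) :
    LM D c (star D (a :: u) []) =
      pc (D c (Finsupp.single a 1)) (star D u []) := by
  rw [star_nil_right, LM_single, one_smul, Lw_cons, star_nil_right]

lemma SE_cons_cons (hassoc : ∀ x y z, D (D x y) z = D x (D y z))
    (c : Z →₀ ℚ) (a b : Z) (u v : List Z) :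
    LM D c (star D (a :: u) (b :: v)) =
      pc (D c (Finsupp.single a 1)) (star D u (b :: v))
      + pc (D c (Finsupp.single b 1)) (star D (a :: u) v)
      - LM D (D c (D (Finsupp.single a 1) (Finsupp.single b 1)))
          (star D u v) := by
  rw [star_cons_cons, map_sub, map_add, LM_preL, LM_preL, LM_LM D hassoc]

/-- `D`-product of the letters of a word (`0` for the empty word). -/
noncomputable def dprod : List Z → (Z →₀ ℚ)
  | [] => 0
  | x :: t => t.foldl (fun m z => D m (Finsupp.single z 1)) (Finsupp.single x 1)

lemma foldl_D (hcomm : ∀ x y : Z →₀ ℚ, D x y = D y x)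
    (hassoc : ∀ x y z : Z →₀ ℚ, D (D x y) z = D x (D y z)) (t : List Z) (m x : Z →₀ ℚ) :
    t.foldl (fun m z => D m (Finsupp.single z 1)) (D m x)
      = D (t.foldl (fun m z => D m (Finsupp.single z 1)) m) x := by
  induction t generalizing m with
  | nil => rfl
  | cons z t ih =>
      show List.foldl _ (D (D m x) (Finsupp.single z 1)) t = _
      rw [show D (D m x) (Finsupp.single z 1)
            = D (D m (Finsupp.single z 1)) x by
          rw [hassoc, hcomm x, ← hassoc], ih]
      rfl

lemma dprod_concat (l : List Z) (x : Z) (hl : l ≠ []) :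
    dprod D (l ++ [x]) = D (dprod D l) (Finsupp.single x 1) := by
  cases l with
  | nil => exact absurd rfl hl
  | cons y t => simp [dprod, List.foldl_append]

lemma dprod_cons (hcomm : ∀ x y : Z →₀ ℚ, D x y = D y x)
    (hassoc : ∀ x y z : Z →₀ ℚ, D (D x y) z = D x (D y z)) (l : List Z) (x : Z) (hl : l ≠ []) :
    dprod D (x :: l) = D (dprod D l) (Finsupp.single x 1) := by
  cases l with
  | nil => exact absurd rfl hl
  | cons y t =>
      show List.foldl _ (D (Finsupp.single x 1) (Finsupp.single y 1)) t = _
      rw [hcomm (Finsupp.single x 1), foldl_D D hcomm hassoc]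
      rfl

end Aux3

section Aux4
variable {Z : Type*}

lemma take_ne_nil' (w : List Z) (g : ℕ) (h1 : 1 ≤ g) (h2 : 1 ≤ w.length) :
    w.take g ≠ [] := by
  intro h
  have := congrArg List.length h
  simp only [List.length_take, List.length_nil] at this
  omega

lemma slice_concat (l : List Z) (g : ℕ) (h : g < l.length) :
    ∃ b, l.take (g+1) = l.take g ++ [b] ∧ l.drop g = b :: l.drop (g+1) := by
  refine ⟨l[g], ?_, List.drop_eq_getElem_cons h⟩
  rw [List.take_succ, List.getElem?_eq_getElem h]
  rfl

lemma take_rev_cons (w : List Z) (k : ℕ) (h1 : 1 ≤ k) (h2 : k ≤ w.length) :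
    ∃ a, (w.take k).reverse = a :: (w.take (k-1)).reverse
        ∧ w.drop (k-1) = a :: w.drop k := by
  obtain ⟨j, rfl⟩ : ∃ j, k = j + 1 := ⟨k - 1, by omega⟩
  have hj : j < w.length := by omega
  refine ⟨w[j], ?_, by simpa using List.drop_eq_getElem_cons hj⟩
  rw [List.take_succ, List.getElem?_eq_getElem hj]
  simp

end Aux4

section Main
variable {Z : Type*} (D : (Z →₀ ℚ) →ₗ[ℚ] (Z →₀ ℚ) →ₗ[ℚ] (Z →₀ ℚ))

/-- Term of the window sum. -/
noncomputable def Ht (w : List Z) (g i : ℕ) : QW Z :=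
  LM D (dprod D ((w.drop i).take g)) (star D ((w.take i).reverse) (w.drop (i+g)))

/-- The window sum. -/
noncomputable def Sg (w : List Z) (g : ℕ) : QW Z :=
  ∑ i ∈ Finset.range (w.length + 1 - g), ((-1:ℚ))^i • Ht D w g i

/-- Edge term. -/
noncomputable def Eg (w : List Z) (g j : ℕ) : QW Z :=
  pc (dprod D ((w.drop j).take (g+1)))
    (star D ((w.take j).reverse) (w.drop (j+(g+1))))

/-- Guarded edge term. -/
noncomputable def Gg (w : List Z) (g j : ℕ) : QW Z :=
  if 1 ≤ j ∧ j ≤ w.length - g then Eg D w g (j-1) else 0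

lemma expand2 (hcomm : ∀ x y : Z →₀ ℚ, D x y = D y x)
    (hassoc : ∀ x y z : Z →₀ ℚ, D (D x y) z = D x (D y z))
    (w : List Z) (g i : ℕ) (hg : 1 ≤ g) (hgr : g ≤ w.length)
    (hi : i ≤ w.length - g) :
    Ht D w g i = Gg D w g i + Gg D w g (i+1)
      - (if 1 ≤ i ∧ i < w.length - g then Ht D w (g+2) (i-1) else 0) := by
  have hwlen : 1 ≤ w.length := le_trans hg hgr
  by_cases hi1 : 1 ≤ i
  · -- i ≥ 1 : left word is nonempty
    obtain ⟨a, hrev, hdropa⟩ := take_rev_cons w i hi1 (by omega)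
    have hslice_a : (w.drop (i-1)).take (g+1) = a :: (w.drop i).take g := by
      rw [hdropa, List.take_succ_cons]
    have hDa : D (dprod D ((w.drop i).take g)) (Finsupp.single a 1)
        = dprod D ((w.drop (i-1)).take (g+1)) := by
      rw [hslice_a, dprod_cons D hcomm hassoc]
      refine take_ne_nil' _ _ hg ?_
      simp only [List.length_drop]
      omega
    by_cases hiN : i < w.length - g
    · -- middle case : right word nonempty too
      have hig : i + g < w.length := by omega
      obtain ⟨b, htb, hdb⟩ := slice_concat (w.drop i) g
        (by rw [List.length_drop]; omega)
      have hdrop_ig : w.drop (i+g) = b :: w.drop (i+g+1) := by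
        have h1 : (w.drop i).drop g = w.drop (i+g) := by rw [List.drop_drop]
        have h2 : (w.drop i).drop (g+1) = w.drop (i+g+1) := by
          rw [List.drop_drop]; ring_nf
        rw [← h1, ← h2]; exact hdb
      have hDb : D (dprod D ((w.drop i).take g)) (Finsupp.single b 1)
          = dprod D ((w.drop i).take (g+1)) := by
        rw [htb, dprod_concat]
        refine take_ne_nil' _ _ hg ?_
        simp only [List.length_drop]; omega
      have hDab : D (dprod D ((w.drop i).take g))
            (D (Finsupp.single a 1) (Finsupp.single b 1))
          = dprod D ((w.drop (i-1)).take (g+2)) := by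
        rw [← hassoc, hDa]
        have h3 : (w.drop (i-1)).take (g+2) = (w.drop (i-1)).take (g+1) ++ [b] := by
          rw [hdropa, List.take_succ_cons, List.take_succ_cons, htb]
          rfl
        rw [h3, dprod_concat]
        rw [hslice_a]
        exact List.cons_ne_nil _ _
      rw [Ht, hrev, hdrop_ig, SE_cons_cons D hassoc, hDa, hDb, hDab]
      have e1 : Gg D w g i = Eg D w g (i-1) := if_pos ⟨hi1, hi⟩
      have e2 : Gg D w g (i+1) = Eg D w g i := by
        rw [Gg, if_pos ⟨by omega, by omega⟩]
        simp
      have i1 : i - 1 + (g + 1) = i + g := by omega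
      have i2 : i - 1 + (g + 2) = i + g + 1 := by omega
      rw [e1, e2, if_pos ⟨hi1, hiN⟩, Eg, Eg, Ht, i1, i2, hrev, hdrop_ig, ← Nat.add_assoc]
    · -- i = N : right word empty
      
      have hdrop_ig : w.drop (i+g) = [] := by
        apply List.drop_eq_nil_of_le
        omega
      rw [Ht, hrev, hdrop_ig, SE_nil_right, hDa]
      have e1 : Gg D w g i = Eg D w g (i-1) := if_pos ⟨hi1, hi⟩
      have e2 : Gg D w g (i+1) = 0 := if_neg (by omega)
      have i1 : i - 1 + (g + 1) = i + g := by omega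
      rw [e1, e2, if_neg (by omega), add_zero, sub_zero, Eg, i1, hdrop_ig]
  · -- i = 0
    have hi0 : i = 0 := by omega
    subst hi0
    by_cases hgr' : g < w.length
    · obtain ⟨b, htb, hdb⟩ := slice_concat w g (by omega)
      have hdb' : w.drop (0 + g) = b :: w.drop (g+1) := by simpa using hdb
      have hDb : D (dprod D ((w.drop 0).take g)) (Finsupp.single b 1)
          = dprod D ((w.drop 0).take (g+1)) := by
        simp only [List.drop_zero]
        rw [htb, dprod_concat]
        exact take_ne_nil' _ _ hg hwlen
      rw [Ht, hdb']
      simp only [List.take_zero, List.reverse_nil]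
      rw [SE_nil_left, hDb]
      have e1 : Gg D w g 0 = 0 := if_neg (by omega)
      have e2 : Gg D w g 1 = Eg D w g 0 := by rw [Gg, if_pos ⟨le_refl 1, by omega⟩]
      rw [e1, e2, if_neg (by omega), zero_add, sub_zero, Eg]
      simp
    · -- g = r, single term
      have hgr2 : g = w.length := by omega
      have hdrop : w.drop (0 + g) = [] := List.drop_eq_nil_of_le (by omega)
      rw [Ht, hdrop]
      simp only [List.take_zero, List.reverse_nil]
      rw [SE_nil_nil]
      rw [Gg, if_neg (by omega), Gg, if_neg (by omega), if_neg (by omega)]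
      simp

end Main

section Main2
variable {Z : Type*} (D : (Z →₀ ℚ) →ₗ[ℚ] (Z →₀ ℚ) →ₗ[ℚ] (Z →₀ ℚ))

lemma sum_tele (N : ℕ) (G : ℕ → QW Z) (h0 : G 0 = 0) (hN : G (N+1) = 0) :
    ∑ i ∈ Finset.range (N+1), ((-1:ℚ)^i • G i + (-1:ℚ)^i • G (i+1)) = 0 := by
  rw [Finset.sum_add_distrib]
  set f : ℕ → QW Z := fun j => (-1:ℚ)^j • G j with hf
  have key : ∑ i ∈ Finset.range (N+1), (-1:ℚ)^i • G (i+1)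
      = - ∑ i ∈ Finset.range (N+1), f (i+1) := by
    rw [← Finset.sum_neg_distrib]
    refine Finset.sum_congr rfl fun i _ => ?_
    rw [hf]
    simp only [pow_succ]
    rw [mul_comm, neg_one_mul, neg_smul, neg_neg]
  have h1 : ∑ i ∈ Finset.range (N+2), f i
      = ∑ i ∈ Finset.range (N+1), f (i+1) + f 0 := Finset.sum_range_succ' f (N+1)
  have h2 : ∑ i ∈ Finset.range (N+2), f i
      = ∑ i ∈ Finset.range (N+1), f i + f (N+1) := Finset.sum_range_succ f (N+1)
  have hf0 : f 0 = 0 := by simp [hf, h0]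
  have hfN : f (N+1) = 0 := by simp [hf, hN]
  rw [key]
  have heq : ∑ i ∈ Finset.range (N+1), f (i+1) = ∑ i ∈ Finset.range (N+1), f i :=
    calc ∑ i ∈ Finset.range (N+1), f (i+1)
        = ∑ i ∈ Finset.range (N+1), f (i+1) + f 0 := by rw [hf0, add_zero]
      _ = ∑ i ∈ Finset.range (N+2), f i := h1.symm
      _ = ∑ i ∈ Finset.range (N+1), f i + f (N+1) := h2
      _ = ∑ i ∈ Finset.range (N+1), f i := by rw [hfN, add_zero]
  rw [heq]
  exact add_neg_cancel _

end Main2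

section Main3
variable {Z : Type*} (D : (Z →₀ ℚ) →ₗ[ℚ] (Z →₀ ℚ) →ₗ[ℚ] (Z →₀ ℚ))

lemma sum_resid (N : ℕ) (H : ℕ → QW Z) :
    ∑ i ∈ Finset.range (N+1),
        ((-1:ℚ)^i • if 1 ≤ i ∧ i < N then H (i-1) else 0)
      = - ∑ j ∈ Finset.range (N-1), (-1:ℚ)^j • H j := by
  cases N with
  | zero => simp
  | succ M =>
      rw [Finset.sum_range_succ']
      have h0 : ((-1:ℚ)^0 • if 1 ≤ 0 ∧ 0 < M+1 then H (0-1) else 0) = 0 := by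
        norm_num
      rw [h0, add_zero, Finset.sum_range_succ]
      have hM : ((-1:ℚ)^(M+1) • if 1 ≤ M+1 ∧ M+1 < M+1 then H (M+1-1) else 0)
          = 0 := by
        rw [if_neg (by omega), smul_zero]
      rw [hM, add_zero]
      have hs : ∀ i ∈ Finset.range M,
          ((-1:ℚ)^(i+1) • if 1 ≤ i+1 ∧ i+1 < M+1 then H (i+1-1) else 0)
            = -((-1:ℚ)^i • H i) := by
        intro i hi
        rw [if_pos ⟨by omega, by simpa using Finset.mem_range.1 hi⟩]
        simp only [Nat.add_sub_cancel, pow_succ]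
        rw [mul_comm, neg_one_mul, neg_smul]
      rw [Finset.sum_congr rfl hs, Finset.sum_neg_distrib]
      simp

lemma Sg_step (hcomm : ∀ x y : Z →₀ ℚ, D x y = D y x)
    (hassoc : ∀ x y z : Z →₀ ℚ, D (D x y) z = D x (D y z))
    (w : List Z) (g : ℕ) (hg : 2 ≤ g) :
    Sg D w g = Sg D w (g+2) := by
  by_cases hgr : g ≤ w.length
  · have hN : w.length + 1 - g = (w.length - g) + 1 := by omega
    have hN2 : w.length + 1 - (g+2) = (w.length - g) - 1 := by omega
    rw [Sg, Sg, hN, hN2]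
    have hterm : ∀ i ∈ Finset.range ((w.length - g) + 1),
        (-1:ℚ)^i • Ht D w g i
          = ((-1:ℚ)^i • Gg D w g i + (-1:ℚ)^i • Gg D w g (i+1))
            - ((-1:ℚ)^i • if 1 ≤ i ∧ i < w.length - g then Ht D w (g+2) (i-1)
                else 0) := by
      intro i hi
      rw [expand2 D hcomm hassoc w g i (by omega) hgr
        (by have := Finset.mem_range.1 hi; omega)]
      rw [smul_sub, smul_add]
    have hG0 : Gg D w g 0 = 0 := by rw [Gg]; exact if_neg (by omega)
    have hGN : Gg D w g ((w.length - g) + 1) = 0 := by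
      rw [Gg]; exact if_neg (by omega)
    rw [Finset.sum_congr rfl hterm, Finset.sum_sub_distrib,
      sum_tele _ (Gg D w g) hG0 hGN,
      sum_resid _ (Ht D w (g+2)), zero_sub, neg_neg]
  · have h1 : w.length + 1 - g = 0 := by omega
    have h2 : w.length + 1 - (g+2) = 0 := by omega
    rw [Sg, Sg, h1, h2]
    simp

end Main3

section Main4
variable {Z : Type*} (D : (Z →₀ ℚ) →ₗ[ℚ] (Z →₀ ℚ) →ₗ[ℚ] (Z →₀ ℚ))

noncomputable def Xh (w : List Z) (k : ℕ) : QW Z :=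
  match (w.take k).reverse with
  | [] => 0
  | a :: t => preL a (star D t (w.drop k))

noncomputable def Xg (w : List Z) (k : ℕ) : QW Z :=
  if 1 ≤ k ∧ k ≤ w.length then Xh D w k else 0

lemma Xh_eq (w : List Z) (k : ℕ) (a : Z) (t : List Z)
    (h : (w.take k).reverse = a :: t) :
    Xh D w k = preL a (star D t (w.drop k)) := by
  simp only [Xh, h]

lemma expand1 (w : List Z) (k : ℕ) (hk : k ≤ w.length) (hw : 1 ≤ w.length) :
    star D ((w.take k).reverse) (w.drop k)
      = Xg D w k + Xg D w (k+1)
        - (if 1 ≤ k ∧ k < w.length then Ht D w 2 (k-1) else 0) := by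
  by_cases hk1 : 1 ≤ k
  · obtain ⟨a, hrev, hdropa⟩ := take_rev_cons w k hk1 hk
    have eXk : Xg D w k = preL a (star D ((w.take (k-1)).reverse) (w.drop k)) := by
      rw [Xg, if_pos ⟨hk1, hk⟩, Xh_eq D w k a _ hrev]
    by_cases hkr : k < w.length
    · obtain ⟨b, hrevb, hdropb⟩ := take_rev_cons w (k+1) (by omega) (by omega)
      simp only [Nat.add_sub_cancel] at hrevb hdropb
      have eXk1 : Xg D w (k+1)
          = preL b (star D ((w.take k).reverse) (w.drop (k+1))) := by
        rw [Xg, if_pos ⟨by omega, by omega⟩, Xh_eq D w (k+1) b _ hrevb]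
      have hres : (if 1 ≤ k ∧ k < w.length then Ht D w 2 (k-1) else 0)
          = LM D (D (Finsupp.single a 1) (Finsupp.single b 1))
              (star D ((w.take (k-1)).reverse) (w.drop (k+1))) := by
        rw [if_pos ⟨hk1, hkr⟩, Ht]
        have hsl : (w.drop (k-1)).take 2 = [a, b] := by
          rw [hdropa, List.take_succ_cons, hdropb, List.take_succ_cons,
            List.take_zero]
        have hk2 : k - 1 + 2 = k + 1 := by omega
        rw [hsl, hk2]
        rfl
      rw [hrev, hdropb, star_cons_cons, eXk, eXk1, hres, hrev, ← hdropb]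
    · have hkr' : k = w.length := by omega
      have hdrop : w.drop k = [] := List.drop_eq_nil_of_le (by omega)
      rw [hrev, hdrop, star_nil_right, eXk, hdrop, star_nil_right]
      have eXk1 : Xg D w (k+1) = 0 := by rw [Xg]; exact if_neg (by omega)
      rw [eXk1, if_neg (by omega), preL_single, add_zero, sub_zero]
  · have hk0 : k = 0 := by omega
    subst hk0
    have hX0 : Xg D w 0 = 0 := by rw [Xg]; exact if_neg (by omega)
    obtain ⟨a, hrev, hdropa⟩ := take_rev_cons w 1 le_rfl hw
    simp only [Nat.sub_self, List.take_zero, List.reverse_nil, List.drop_zero]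
      at hrev hdropa
    have hX1 : Xg D w 1 = preL a (star D [] (w.drop 1)) := by
      rw [Xg, if_pos ⟨le_rfl, hw⟩, Xh_eq D w 1 a [] hrev]
    rw [hX0, hX1, if_neg (by omega), zero_add, sub_zero]
    simp only [List.take_zero, List.reverse_nil, List.drop_zero]
    rw [star_nil_left, star_nil_left, preL_single, ← hdropa]

end Main4

section Final
variable {Z : Type*} (D : (Z →₀ ℚ) →ₗ[ℚ] (Z →₀ ℚ) →ₗ[ℚ] (Z →₀ ℚ))

lemma main_eq_Sg2 (hcomm : ∀ x y : Z →₀ ℚ, D x y = D y x)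
    (hassoc : ∀ x y z : Z →₀ ℚ, D (D x y) z = D x (D y z))
    (w : List Z) (hw : 1 ≤ w.length) :
    ∑ k ∈ Finset.range (w.length + 1),
        ((-1 : ℚ) ^ k) • star D ((w.take k).reverse) (w.drop k)
      = Sg D w 2 := by
  have hterm : ∀ k ∈ Finset.range (w.length + 1),
      (-1:ℚ)^k • star D ((w.take k).reverse) (w.drop k)
        = ((-1:ℚ)^k • Xg D w k + (-1:ℚ)^k • Xg D w (k+1))
          - ((-1:ℚ)^k • if 1 ≤ k ∧ k < w.length then Ht D w 2 (k-1) else 0) := by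
    intro k hk
    rw [expand1 D w k (by have := Finset.mem_range.1 hk; omega) hw]
    rw [smul_sub, smul_add]
  have hX0 : Xg D w 0 = 0 := by rw [Xg]; exact if_neg (by omega)
  have hXN : Xg D w (w.length + 1) = 0 := by rw [Xg]; exact if_neg (by omega)
  rw [show w.length + 1 = w.length + 1 from rfl]
  rw [Finset.sum_congr rfl hterm, Finset.sum_sub_distrib,
    sum_tele _ (Xg D w) hX0 hXN, sum_resid _ (Ht D w 2), zero_sub, neg_neg]
  rw [Sg, show w.length + 1 - 2 = w.length - 1 from by omega]

lemma Sg2_zero (hcomm : ∀ x y : Z →₀ ℚ, D x y = D y x)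
    (hassoc : ∀ x y z : Z →₀ ℚ, D (D x y) z = D x (D y z))
    (w : List Z) : Sg D w 2 = 0 := by
  have step : ∀ n : ℕ, Sg D w 2 = Sg D w (2 + 2 * n) := by
    intro n
    induction n with
    | zero => rfl
    | succ m ih =>
        rw [ih, Sg_step D hcomm hassoc w (2 + 2 * m) (by omega),
          show 2 + 2 * (m + 1) = 2 + 2 * m + 2 from by omega]
  rw [step (w.length)]
  rw [Sg, show w.length + 1 - (2 + 2 * w.length) = 0 by omega]
  simp

end Final

theorem antipode_convolution_vanishes {Z : Type*}
    (D : (Z →₀ ℚ) →ₗ[ℚ] (Z →₀ ℚ) →ₗ[ℚ] (Z →₀ ℚ))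
    (hcomm : ∀ x y, D x y = D y x)
    (hassoc : ∀ x y z, D (D x y) z = D x (D y z))
    (w : List Z) (hw : w ≠ []) :
    ∑ k ∈ Finset.range (w.length + 1),
      ((-1 : ℚ) ^ k) • star D ((w.take k).reverse) (w.drop k) = 0 := by
  have hw1 : 1 ≤ w.length := by
    cases w with
    | nil => exact absurd rfl hw
    | cons a t => simp
  rw [main_eq_Sg2 D hcomm hassoc w hw1, Sg2_zero D hcomm hassoc w]
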